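/- Let G be a finite simple planar graph such that the Lin–Lu–Yau curvature satisfies κ(x,y) > 0 for every edge xy of G. Let xy ∈ E(G) with d_x ≤ d_y, and set S := N(x) \ {y}. Then |N(S) ∩ N(y)| > (1 − 1/d_x)·d_y − (2|N(x,y)| + 1) + |N(S) ∩ N(x,y)|. -/

import Mathlib

open SimpleGraph

/-- `H` is a minor of `G`: there is a family of nonempty, connected, pairwise disjoint
branch sets in `G`, one for each vertex of `H`, with an edge of `G` between the branch
sets corresponding to each edge of `H`. -/
def SimpleGraph.IsMinorOf {W : Type*} {V : Type*} (H : SimpleGraph W) (G : SimpleGraph V) :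
    Prop :=
  ∃ B : W → Set V,
    (∀ w, (G.induce (B w)).Connected) ∧
    (Pairwise fun w₁ w₂ => Disjoint (B w₁) (B w₂)) ∧
    ∀ ⦃w₁ w₂⦄, H.Adj w₁ w₂ → ∃ u ∈ B w₁, ∃ v ∈ B w₂, G.Adj u v

/-- A graph is outerplanar iff it has no `K₄` minor and no `K_{2,3}` minor
(Chartrand–Harary). -/
def Outerplanar {V : Type*} (G : SimpleGraph V) : Prop :=
  ¬ (completeGraph (Fin 4)).IsMinorOf G ∧
  ¬ (completeBipartiteGraph (Fin 2) (Fin 3)).IsMinorOf G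

/-- A graph is planar iff it has no `K₅` minor and no `K_{3,3}` minor (Wagner). -/
def Planar {V : Type*} (G : SimpleGraph V) : Prop :=
  ¬ (completeGraph (Fin 5)).IsMinorOf G ∧
  ¬ (completeBipartiteGraph (Fin 3) (Fin 3)).IsMinorOf G

/-- A maximal outerplanar graph: outerplanar, and adding any edge between two distinct
non-adjacent vertices destroys outerplanarity. -/
def MaximalOuterplanar {V : Type*} (G : SimpleGraph V) : Prop :=
  Outerplanar G ∧ ∀ x y : V, x ≠ y → ¬ G.Adj x y →
    ¬ Outerplanar (G ⊔ fromEdgeSet {s(x, y)})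

/-- The (normalized) graph Laplacian `Δf(v) = (1/d_v) ∑_{u ∈ N(v)} (f u - f v)`. -/
noncomputable def graphLap {V : Type*} (G : SimpleGraph V) [Fintype V] [DecidableRel G.Adj]
    (f : V → ℤ) (v : V) : ℝ :=
  (∑ u ∈ G.neighborFinset v, ((f u : ℝ) - (f v : ℝ))) / (G.degree v)

/-- The Lin–Lu–Yau curvature of the pair `(x, y)`, via the limit-free Laplacian
formulation: the infimum of `Δf(x) - Δf(y)` over integer-valued functions `f` that are
`1`-Lipschitz w.r.t. the graph distance and satisfy `f y - f x = 1`. -/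
noncomputable def llyCurv {V : Type*} (G : SimpleGraph V) [Fintype V] [DecidableRel G.Adj]
    (x y : V) : ℝ :=
  sInf { r : ℝ | ∃ f : V → ℤ,
    (∀ u v : V, |f u - f v| ≤ (G.dist u v : ℤ)) ∧
    f y - f x = 1 ∧
    r = graphLap G f x - graphLap G f y }

/-- Lu–Wang's bound for positively curved planar graphs:
`|N(S) ∩ N(y)| > (1 - 1/d_x) d_y - (2 |N(x,y)| + 1) + |N(S) ∩ N(x,y)|`
where `S = N(x) \\ {y}` and `N(S) = {v : ∃ s ∈ S, vs ∈ E(G)}`. -/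
theorem genbound_of_planar {V : Type*} [Fintype V]
    (G : SimpleGraph V) [DecidableRel G.Adj]
    (hplanar : Planar G)
    (hpos : ∀ u v : V, G.Adj u v → 0 < llyCurv G u v)
    (x y : V) (hxy : G.Adj x y) (hd : G.degree x ≤ G.degree y) :
    (({v : V | ∃ s ∈ G.neighborSet x \ {y}, G.Adj v s} ∩ G.neighborSet y).ncard : ℝ) >
      (1 - 1 / (G.degree x : ℝ)) * (G.degree y : ℝ)
        - (2 * ((G.neighborSet x ∩ G.neighborSet y).ncard : ℝ) + 1)
        + (({v : V | ∃ s ∈ G.neighborSet x \ {y}, G.Adj v s}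
            ∩ (G.neighborSet x ∩ G.neighborSet y)).ncard : ℝ) := by
  classical
  have hne : x ≠ y := G.ne_of_adj hxy
  have hdx : 0 < G.degree x := (G.degree_pos_iff_exists_adj x).mpr ⟨y, hxy⟩
  have hdy : 0 < G.degree y := (G.degree_pos_iff_exists_adj y).mpr ⟨x, hxy.symm⟩
  -- c as a finset card
  have hCcoe : ((G.neighborSet x ∩ G.neighborSet y).ncard : ℝ)
      = ((G.neighborFinset x ∩ G.neighborFinset y).card : ℝ) := by
    rw [show G.neighborSet x ∩ G.neighborSet y
        = ((G.neighborFinset x ∩ G.neighborFinset y : Finset V) : Set V) by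
      ext v
      simp [SimpleGraph.mem_neighborSet]]
    rw [Set.ncard_coe_finset]
  by_cases hdx1 : G.degree x = 1
  · -- degenerate case: N(x) = {y}, so N(S) = ∅
    have hall : ∀ s, G.Adj x s → s = y := by
      intro s hs
      by_contra hsy
      have h2 : 1 < (G.neighborFinset x).card :=
        Finset.one_lt_card.mpr ⟨s, (G.mem_neighborFinset x s).mpr hs, y,
          (G.mem_neighborFinset x y).mpr hxy, hsy⟩
      rw [← G.card_neighborFinset_eq_degree] at hdx1
      omega
    have hNS : {v : V | ∃ s ∈ G.neighborSet x \ {y}, G.Adj v s} = ∅ := by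
      ext v
      simp only [Set.mem_setOf_eq, Set.mem_empty_iff_false, iff_false, not_exists]
      rintro s ⟨⟨hxs, hsy⟩, -⟩
      exact hsy (hall s hxs)
    rw [hNS, Set.empty_inter, Set.empty_inter, Set.ncard_empty]
    have hc0 : (0:ℝ) ≤ ((G.neighborSet x ∩ G.neighborSet y).ncard : ℝ) := by positivity
    rw [hdx1]
    norm_num
    linarith
  · -- main case: degree x ≥ 2
    have hdx2 : 2 ≤ G.degree x := by omega
    -- the test function
    set P : V → Prop := fun v => v = x ∨ (G.Adj x v ∧ v ≠ y) with hPdef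
    set Q : V → Prop := fun v => G.Adj x v ∨ ∃ s, (G.Adj x s ∧ s ≠ y) ∧ G.Adj s v with hQdef
    set f : V → ℤ := fun v => if P v then 0 else if Q v then 1 else 2 with hfdef
    have hfval : ∀ v, f v = if P v then 0 else if Q v then 1 else 2 := fun _ => rfl
    have hfx : f x = 0 := by rw [hfval, if_pos (Or.inl rfl)]
    have hPy : ¬ P y := by rintro (h | ⟨-, h⟩); exact hne h.symm; exact h rfl
    have hfy : f y = 1 := by rw [hfval, if_neg hPy, if_pos (Or.inl hxy)]
    have hf0 : ∀ v, 0 ≤ f v := by intro v; rw [hfval]; split_ifs <;> norm_num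
    have hf2 : ∀ v, f v ≤ 2 := by intro v; rw [hfval]; split_ifs <;> norm_num
    have hstep : ∀ u v, G.Adj u v → f v ≤ f u + 1 := by
      intro u v huv
      by_cases hPu : P u
      · have hfu : f u = 0 := by rw [hfval, if_pos hPu]
        rw [hfu, hfval]
        split_ifs with h1 h2
        · norm_num
        · norm_num
        · exfalso
          apply h2
          rcases hPu with rfl | ⟨hxu, huy⟩
          · exact Or.inl huv
          · exact Or.inr ⟨u, ⟨hxu, huy⟩, huv⟩
      · have hfu : 1 ≤ f u := by rw [hfval, if_neg hPu]; split_ifs <;> norm_num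
        have := hf2 v
        omega
    -- disconnected case gives contradiction
    by_cases hreach : ∀ w, G.Reachable x w
    case neg =>
      exfalso
      push_neg at hreach
      obtain ⟨w, hw⟩ := hreach
      have h0 := hpos x y hxy
      have hemp : { r : ℝ | ∃ g : V → ℤ,
          (∀ u v : V, |g u - g v| ≤ (G.dist u v : ℤ)) ∧
          g y - g x = 1 ∧
          r = graphLap G g x - graphLap G g y } = ∅ := by
        ext r
        simp only [Set.mem_setOf_eq, Set.mem_empty_iff_false, iff_false]
        rintro ⟨g, hlip, hgyx, -⟩
        have hdwx : G.dist w x = 0 := by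
          rw [SimpleGraph.dist_eq_zero_iff_eq_or_not_reachable]
          exact Or.inr (fun h => hw h.symm)
        have hdwy : G.dist w y = 0 := by
          rw [SimpleGraph.dist_eq_zero_iff_eq_or_not_reachable]
          exact Or.inr (fun h => hw (h.trans hxy.symm.reachable).symm)
        have h1 := hlip w x
        have h2 := hlip w y
        rw [hdwx] at h1
        rw [hdwy] at h2
        rw [abs_le] at h1 h2
        push_cast at h1 h2
        omega
      rw [llyCurv, hemp, Real.sInf_empty] at h0
      exact lt_irrefl 0 h0
    -- Lipschitz property
    have hlip : ∀ u v : V, |f u - f v| ≤ (G.dist u v : ℤ) := by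
      intro u v
      rcases eq_or_ne u v with rfl | hne'
      · simp
      · have hr : G.Reachable u v := (hreach u).symm.trans (hreach v)
        have hp : 0 < G.dist u v := hr.pos_dist_of_ne hne'
        rcases Nat.lt_or_ge (G.dist u v) 2 with h | h
        · have hd1 : G.dist u v = 1 := by omega
          have hadj : G.Adj u v := SimpleGraph.dist_eq_one_iff_adj.mp hd1
          have h1 := hstep u v hadj
          have h2 := hstep v u hadj.symm
          rw [hd1, abs_le]
          push_cast
          omega
        · have h1 := hf0 u; have h2 := hf2 u; have h3 := hf0 v; have h4 := hf2 v
          have h5 : (2 : ℤ) ≤ (G.dist u v : ℤ) := by exact_mod_cast h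
          rw [abs_le]
          omega
    -- curvature positivity applied to f
    have hkey : 0 < graphLap G f x - graphLap G f y := by
      have h0 := hpos x y hxy
      rw [llyCurv] at h0
      have hmem : graphLap G f x - graphLap G f y ∈ { r : ℝ | ∃ g : V → ℤ,
          (∀ u v : V, |g u - g v| ≤ (G.dist u v : ℤ)) ∧
          g y - g x = 1 ∧
          r = graphLap G g x - graphLap G g y } :=
        ⟨f, hlip, by rw [hfx, hfy]; norm_num, rfl⟩
      have hbdd : BddBelow { r : ℝ | ∃ g : V → ℤ,
          (∀ u v : V, |g u - g v| ≤ (G.dist u v : ℤ)) ∧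
          g y - g x = 1 ∧
          r = graphLap G g x - graphLap G g y } := by
        by_contra hb
        rw [Real.sInf_of_not_bddBelow hb] at h0
        exact lt_irrefl 0 h0
      exact lt_of_lt_of_le h0 (csInf_le hbdd hmem)
    -- compute graphLap at x
    have hlapx : graphLap G f x = 1 / (G.degree x : ℝ) := by
      rw [graphLap]
      congr 1
      have hpt : ∀ u ∈ G.neighborFinset x, ((f u : ℝ) - (f x : ℝ))
          = if u = y then 1 else 0 := by
        intro u hu
        rw [hfx]
        by_cases h : u = y
        · subst h
          rw [hfy, if_pos rfl]
          norm_num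
        · have hPu : P u := Or.inr ⟨(G.mem_neighborFinset x u).mp hu, h⟩
          rw [hfval, if_pos hPu, if_neg h]
          norm_num
      rw [Finset.sum_congr rfl hpt, Finset.sum_ite_eq' (G.neighborFinset x) y (fun _ => (1:ℝ)),
        if_pos ((G.mem_neighborFinset x y).mpr hxy)]
    -- the key finsets
    set T1 : Finset V := (G.neighborFinset y).filter (fun u => ¬ P u ∧ Q u) with hT1def
    set T0 : Finset V := (G.neighborFinset y).filter P with hT0def
    -- T0 = {x} ∪ common neighbors
    have hT0 : T0 = insert x (G.neighborFinset x ∩ G.neighborFinset y) := by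
      ext u
      simp only [hT0def, Finset.mem_filter, Finset.mem_insert, Finset.mem_inter,
        G.mem_neighborFinset]
      constructor
      · rintro ⟨hyu, rfl | ⟨hxu, -⟩⟩
        · exact Or.inl rfl
        · exact Or.inr ⟨hxu, hyu⟩
      · rintro (rfl | ⟨hxu, hyu⟩)
        · exact ⟨hxy.symm, Or.inl rfl⟩
        · exact ⟨hyu, Or.inr ⟨hxu, (G.ne_of_adj hyu).symm⟩⟩
    have hxnotin : x ∉ G.neighborFinset x ∩ G.neighborFinset y := by
      simp [G.mem_neighborFinset]
    have hT0cardN : T0.card = (G.neighborFinset x ∩ G.neighborFinset y).card + 1 := by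
      rw [hT0, Finset.card_insert_of_notMem hxnotin]
    have hT0card : (T0.card : ℝ)
        = ((G.neighborFinset x ∩ G.neighborFinset y).card : ℝ) + 1 := by
      exact_mod_cast hT0cardN
    -- compute graphLap at y
    have hlapy : graphLap G f y
        = ((G.degree y : ℝ) - 2 * T0.card - T1.card) / (G.degree y : ℝ) := by
      rw [graphLap]
      congr 1
      have hpt : ∀ u, ((f u : ℝ) - (f y : ℝ))
          = 1 - 2 * (if P u then (1:ℝ) else 0) - (if ¬ P u ∧ Q u then (1:ℝ) else 0) := by
        intro u
        rw [hfy, hfval]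
        by_cases h1 : P u <;> by_cases h2 : Q u <;> simp [h1, h2] <;> norm_num
      rw [Finset.sum_congr rfl (fun u _ => hpt u)]
      rw [Finset.sum_sub_distrib, Finset.sum_sub_distrib, Finset.sum_const,
        ← Finset.mul_sum, Finset.sum_boole, Finset.sum_boole]
      simp only [nsmul_eq_mul, mul_one, G.card_neighborFinset_eq_degree]
      rfl
    -- identify the ncards with finset cards
    set Afin : Finset V := Finset.univ.filter
      (fun v => (∃ s ∈ G.neighborSet x \ {y}, G.Adj v s) ∧ G.Adj y v) with hAdef
    set Bfin : Finset V := Finset.univ.filter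
      (fun v => (∃ s ∈ G.neighborSet x \ {y}, G.Adj v s) ∧ G.Adj x v ∧ G.Adj y v) with hBdef
    have hAcoe : (({v : V | ∃ s ∈ G.neighborSet x \ {y}, G.Adj v s}
        ∩ G.neighborSet y).ncard : ℝ) = (Afin.card : ℝ) := by
      congr 1
      rw [show {v : V | ∃ s ∈ G.neighborSet x \ {y}, G.Adj v s} ∩ G.neighborSet y
          = (Afin : Set V) by
        ext v
        simp [hAdef, SimpleGraph.mem_neighborSet]]
      rw [Set.ncard_coe_finset]
    have hBcoe : (({v : V | ∃ s ∈ G.neighborSet x \ {y}, G.Adj v s}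
        ∩ (G.neighborSet x ∩ G.neighborSet y)).ncard : ℝ) = (Bfin.card : ℝ) := by
      congr 1
      rw [show {v : V | ∃ s ∈ G.neighborSet x \ {y}, G.Adj v s}
          ∩ (G.neighborSet x ∩ G.neighborSet y) = (Bfin : Set V) by
        ext v
        simp only [hBdef, Finset.coe_filter, Finset.mem_univ, true_and,
          Set.mem_inter_iff, Set.mem_setOf_eq, SimpleGraph.mem_neighborSet]]
      rw [Set.ncard_coe_finset]
    -- the main counting inequality : Afin.card ≥ 1 + T1.card + Bfin.card
    have hcount : 1 + T1.card + Bfin.card ≤ Afin.card := by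
      have hxA : x ∈ Afin := by
        rw [hAdef, Finset.mem_filter]
        refine ⟨Finset.mem_univ x, ?_, hxy.symm⟩
        obtain ⟨s, hs, hsy⟩ :=
          Finset.exists_mem_ne (s := G.neighborFinset x) (show 1 < G.degree x by omega) y
        rw [G.mem_neighborFinset] at hs
        exact ⟨s, ⟨hs, hsy⟩, hs⟩
      have hsub : insert x (T1 ∪ Bfin) ⊆ Afin := by
        intro u hu
        rw [Finset.mem_insert, Finset.mem_union] at hu
        rcases hu with rfl | hu | hu
        · exact hxA
        · rw [hT1def, Finset.mem_filter, G.mem_neighborFinset] at hu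
          obtain ⟨hyu, hnPu, hQu⟩ := hu
          rw [hAdef, Finset.mem_filter]
          refine ⟨Finset.mem_univ u, ?_, hyu⟩
          rcases hQu with hxu | ⟨s, hs, hsu⟩
          · exact absurd (Or.inr ⟨hxu, (G.ne_of_adj hyu).symm⟩) hnPu
          · exact ⟨s, ⟨hs.1, hs.2⟩, hsu.symm⟩
        · rw [hBdef, Finset.mem_filter] at hu
          rw [hAdef, Finset.mem_filter]
          exact ⟨Finset.mem_univ u, hu.2.1, hu.2.2.2⟩
      have hxT1 : x ∉ T1 ∪ Bfin := by
        rw [Finset.mem_union, hT1def, hBdef]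
        rintro (h | h)
        · rw [Finset.mem_filter] at h
          exact h.2.1 (Or.inl rfl)
        · rw [Finset.mem_filter] at h
          exact G.irrefl h.2.2.1
      have hdisj : Disjoint T1 Bfin := by
        rw [Finset.disjoint_left]
        intro u hu1 hu2
        rw [hT1def, Finset.mem_filter, G.mem_neighborFinset] at hu1
        rw [hBdef, Finset.mem_filter] at hu2
        exact hu1.2.1 (Or.inr ⟨hu2.2.2.1, (G.ne_of_adj hu1.1).symm⟩)
      calc 1 + T1.card + Bfin.card = (insert x (T1 ∪ Bfin)).card := by
            rw [Finset.card_insert_of_notMem hxT1, Finset.card_union_of_disjoint hdisj]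
            ring
        _ ≤ Afin.card := Finset.card_le_card hsub
    -- finish with arithmetic
    rw [hlapx, hlapy] at hkey
    rw [hAcoe, hBcoe, hCcoe]
    have hdyR : (0:ℝ) < (G.degree y : ℝ) := by exact_mod_cast hdy
    have hdxR : (0:ℝ) < (G.degree x : ℝ) := by exact_mod_cast hdx
    have hkey2 : (G.degree y : ℝ) - 2 * T0.card - T1.card
        < (G.degree y : ℝ) * (1 / (G.degree x : ℝ)) := by
      rw [sub_pos, div_lt_iff₀ hdyR] at hkey
      linarith
    have hcountR : 1 + (T1.card : ℝ) + (Bfin.card : ℝ) ≤ (Afin.card : ℝ) := by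
      exact_mod_cast hcount
    rw [hT0card] at hkey2
    linarith
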